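/- Let E be a finite set with a linear ordering <, let 0 ≤ r ≤ |E|, and let U = {u_1 < … < u_r} be an r-element subset of E. Then the family 𝔅 = { B ⊆ E : |B| = r and u_ℓ ≤ b_ℓ for all ℓ, where B = {b_1 < … < b_r} } is the collection of bases of a matroid on E; that is, 𝔅 is nonempty and satisfies the basis exchange property: for all B_1, B_2 ∈ 𝔅 and every x ∈ B_1 ∖ B_2 there exists y ∈ B_2 ∖ B_1 with (B_1 ∖ {x}) ∪ {y} ∈ 𝔅. -/

import Mathlib

open scoped Classical

namespace GPoly

/-- A step of a Delannoy path: east `+(1,0)`, north `+(0,1)` or diagonal `+(1,1)`. -/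
inductive DStep : Type
  | east : DStep
  | north : DStep
  | diag : DStep
  deriving DecidableEq

/-- Horizontal displacement of a step. -/
def DStep.dx : DStep → ℕ
  | .east => 1
  | .north => 0
  | .diag => 1

/-- Vertical displacement of a step. -/
def DStep.dy : DStep → ℕ
  | .east => 0
  | .north => 1
  | .diag => 1

/-- Position reached after the first `k` steps of `P`, starting at the point `s`. -/
def pathPos (s : ℕ × ℕ) (P : List DStep) (k : ℕ) : ℕ × ℕ :=
  (s.1 + ((P.take k).map DStep.dx).sum, s.2 + ((P.take k).map DStep.dy).sum)

/-- The Gale order: `U ≤ B` iff the increasing enumerations satisfy `u_ℓ ≤ b_ℓ`. -/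
def galeLe {α : Type*} [LinearOrder α] (U B : Finset α) : Prop :=
  List.Forall₂ (· ≤ ·) (U.sort (· ≤ ·)) (B.sort (· ≤ ·))

/-- Bases of the Schubert matroid `SM(U)` of rank `r` on `[n] = {1, …, n}`:
all `r`-subsets `B` of `[n]` with `U ≤ B` in the Gale order. -/
noncomputable def schubertBases (n r : ℕ) (U : Finset ℕ) : Finset (Finset ℕ) :=
  (Finset.Icc 1 n).powerset.filter fun B => B.card = r ∧ galeLe U B

/-- The point `p` lies weakly below the lattice path `path(U)`. -/
def belowPath (U : Finset ℕ) (p : ℕ × ℕ) : Prop :=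
  p.2 ≤ (U ∩ Finset.Icc 1 (p.1 + p.2)).card

/-- `path(U)` traverses the vertical unit segment from `(x, y)` to `(x, y+1)`
(by its north step number `x + y + 1`). -/
def uVertSeg (U : Finset ℕ) (x y : ℕ) : Prop :=
  x + y + 1 ∈ U ∧ (U ∩ Finset.Icc 1 (x + y + 1)).card = y + 1

/-- A Delannoy path associated to `SM(U)`: starts at `(1,1)`, ends at `(n-r, r)` and
stays weakly below `path(U)`. -/
def IsDelannoy (n r : ℕ) (U : Finset ℕ) (P : List DStep) : Prop :=
  pathPos (1, 1) P P.length = (n - r, r) ∧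
    ∀ k ≤ P.length, belowPath U (pathPos (1, 1) P k)

/-- Admissible Delannoy path associated to `SM(U)`. -/
def IsAdmissible (n r : ℕ) (U : Finset ℕ) (P : List DStep) : Prop :=
  IsDelannoy n r U P ∧
    ∀ (k : ℕ) (h : k < P.length),
      (P.get ⟨k, h⟩ = DStep.north →
        pathPos (1, 1) P (k + 1) = (n - r, r) ∨
          ¬ uVertSeg U (pathPos (1, 1) P k).1 (pathPos (1, 1) P k).2) ∧
      (P.get ⟨k, h⟩ = DStep.diag →
        belowPath U ((pathPos (1, 1) P k).1, (pathPos (1, 1) P k).2 + 1) ∧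
          ¬ uVertSeg U (pathPos (1, 1) P k).1 (pathPos (1, 1) P k).2)

/-- Number of diagonal steps of a path. -/
def diagCount (P : List DStep) : ℕ := (P.filter (· = DStep.diag)).length

/-- The set of indices (0-based) of the diagonal steps of `P`. -/
def diagIndices (P : List DStep) : Finset ℕ :=
  (Finset.range P.length).filter fun k => P.getD k DStep.east = DStep.diag

/-- Replace a diagonal step by a north step followed by an east step. -/
def expandNE : DStep → List DStep
  | DStep.diag => [DStep.north, DStep.east]
  | s => [s]

/-- Replace a diagonal step by an east step followed by a north step. -/
def expandEN : DStep → List DStep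
  | DStep.diag => [DStep.east, DStep.north]
  | s => [s]

/-- The full lattice path of `B_P`: an east step, a north step, then the steps of `P`
with each diagonal step replaced by a north step immediately followed by an east step. -/
def fullPath (P : List DStep) : List DStep :=
  DStep.east :: DStep.north :: (P.map expandNE).flatten

/-- The subset of `[n]` whose `path` is the given (diagonal-free) list of steps:
the set of (1-based) positions of the north steps. -/
def northSet (L : List DStep) : Finset ℕ :=
  ((Finset.range L.length).filter fun k => L.getD k DStep.east = DStep.north).image (· + 1)

/-- The basis `B_P` associated to a Delannoy path `P`. -/
def delannoyBasis (P : List DStep) : Finset ℕ := northSet (fullPath P)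

/-! ### Matroid notions for a family of bases -/

/-- `S` is independent for the basis family `ℬ`: it is contained in some basis. -/
def famIndep (ℬ : Finset (Finset ℕ)) (S : Finset ℕ) : Prop := ∃ B ∈ ℬ, S ⊆ B

/-- `C` is a circuit for the basis family `ℬ`: a minimal dependent set. -/
def famCircuit (ℬ : Finset (Finset ℕ)) (C : Finset ℕ) : Prop :=
  ¬ famIndep ℬ C ∧ ∀ C' ⊂ C, famIndep ℬ C'

/-- The dual basis family on the ground set `E`: complements of bases. -/
noncomputable def famDual (E : Finset ℕ) (ℬ : Finset (Finset ℕ)) : Finset (Finset ℕ) :=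
  ℬ.image fun B => E \ B

/-- `e ∉ B` is externally active: `e` is the smallest element of the unique circuit
contained in `B ∪ {e}`. -/
def ExtActive (E : Finset ℕ) (ℬ : Finset (Finset ℕ)) (B : Finset ℕ) (e : ℕ) : Prop :=
  e ∈ E ∧ e ∉ B ∧
    ∃ C, C ⊆ insert e B ∧ famCircuit ℬ C ∧ e ∈ C ∧ ∀ x ∈ C, e ≤ x

/-- `i ∈ B` is internally active: `i` is the smallest element of the unique cocircuit
contained in `(E ∖ B) ∪ {i}`. -/
def IntActive (E : Finset ℕ) (ℬ : Finset (Finset ℕ)) (B : Finset ℕ) (i : ℕ) : Prop :=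
  i ∈ B ∧
    ∃ C, C ⊆ insert i (E \ B) ∧ famCircuit (famDual E ℬ) C ∧ i ∈ C ∧ ∀ x ∈ C, i ≤ x

/-- External activity `e(B)`. -/
noncomputable def extAct (E : Finset ℕ) (ℬ : Finset (Finset ℕ)) (B : Finset ℕ) : ℕ :=
  (E.filter (ExtActive E ℬ B)).card

/-- Internal activity `i(B)`. -/
noncomputable def intAct (E : Finset ℕ) (ℬ : Finset (Finset ℕ)) (B : Finset ℕ) : ℕ :=
  (E.filter (IntActive E ℬ B)).card

/-- The statistic `α(B)`: the number of `i ∈ B` such that `B' = (B ∖ {i}) ∪ {i+1}`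
is a basis with `e(B') = e(B)` and `i(B') = i(B)`. -/
noncomputable def alphaStat (E : Finset ℕ) (ℬ : Finset (Finset ℕ)) (B : Finset ℕ) : ℕ :=
  (B.filter fun i =>
    insert (i + 1) (B.erase i) ∈ ℬ ∧
      extAct E ℬ (insert (i + 1) (B.erase i)) = extAct E ℬ B ∧
      intAct E ℬ (insert (i + 1) (B.erase i)) = intAct E ℬ B).card

/-- The rank function determined by a family of bases. -/
noncomputable def famRank (ℬ : Finset (Finset ℕ)) (A : Finset ℕ) : ℕ :=
  ℬ.sup fun B => (A ∩ B).card

/-- The β-invariant: `β(M) = (−1)^{rk(E)} Σ_{A ⊆ E} (−1)^{|A|} rk(A)`. -/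
noncomputable def betaInv (E : Finset ℕ) (ℬ : Finset (Finset ℕ)) : ℤ :=
  (-1) ^ famRank ℬ E * ∑ A ∈ E.powerset, (-1) ^ A.card * (famRank ℬ A : ℤ)

/-- `ℬ` is the collection of bases of a matroid with ground set `E`:
it is a nonempty family of subsets of `E` satisfying the basis exchange property. -/
def IsBasisFamily (E : Finset ℕ) (ℬ : Finset (Finset ℕ)) : Prop :=
  ℬ.Nonempty ∧ (∀ B ∈ ℬ, B ⊆ E) ∧
    ∀ B₁ ∈ ℬ, ∀ B₂ ∈ ℬ, ∀ x ∈ B₁ \ B₂, ∃ y ∈ B₂ \ B₁, insert y (B₁.erase x) ∈ ℬ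

/-- Two elements lie in a common component: they are equal or in a common circuit. -/
def connRel (ℬ : Finset (Finset ℕ)) (e f : ℕ) : Prop :=
  e = f ∨ ∃ C, famCircuit ℬ C ∧ e ∈ C ∧ f ∈ C

/-- The number of connected components of the matroid with bases `ℬ` on `E`. -/
noncomputable def numComponents (E : Finset ℕ) (ℬ : Finset (Finset ℕ)) : ℕ :=
  Set.ncard {S : Set ℕ | ∃ e ∈ E, S = {f | f ∈ E ∧ Relation.EqvGen (connRel ℬ) e f}}

/-- The matroid with bases `ℬ` on ground set `E` is connected. -/
def IsConnectedFam (E : Finset ℕ) (ℬ : Finset (Finset ℕ)) : Prop :=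
  E.Nonempty ∧ ∀ e ∈ E, ∀ f ∈ E, Relation.EqvGen (connRel ℬ) e f

/-- Series-parallel matroid: isomorphic to `U_{0,1}` or `U_{1,1}`
(a single loop or a single coloop), or connected with β-invariant `1`. -/
def IsSeriesParallel (E : Finset ℕ) (ℬ : Finset (Finset ℕ)) : Prop :=
  (E.card = 1 ∧ (ℬ = {∅} ∨ ℬ = {E})) ∨ (IsConnectedFam E ℬ ∧ betaInv E ℬ = 1)

/-- The bases of the restriction of the matroid with bases `ℬ` to the set `F`:
the maximal intersections of bases with `F`. -/
noncomputable def famRestrict (ℬ : Finset (Finset ℕ)) (F : Finset ℕ) : Finset (Finset ℕ) :=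
  (ℬ.image (· ∩ F)).filter fun S => ∀ T ∈ ℬ.image (· ∩ F), S ⊆ T → S = T

/-- The matroid with bases `ℬ` on `E` is a direct sum of series-parallel matroids. -/
def IsDirectSumOfSeriesParallel (E : Finset ℕ) (ℬ : Finset (Finset ℕ)) : Prop :=
  ∃ parts : Finset (Finset ℕ),
    (↑parts : Set (Finset ℕ)).PairwiseDisjoint id ∧
    parts.sup id = E ∧
    (∀ S ∈ parts, IsSeriesParallel S (famRestrict ℬ S)) ∧
    ℬ = E.powerset.filter fun B => ∀ S ∈ parts, B ∩ S ∈ famRestrict ℬ S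

/-! ### Base polytopes -/

/-- The indicator vector of `B ⊆ E`, as a point of `ℝ^E`. -/
noncomputable def basisVector (E : Finset ℕ) (B : Finset ℕ) : ↑E → ℝ :=
  fun e => if (e : ℕ) ∈ B then 1 else 0

/-- The base polytope of the matroid with bases `ℬ` on `E`:
the convex hull in `ℝ^E` of the indicator vectors of the bases. -/
noncomputable def basePolytope (E : Finset ℕ) (ℬ : Finset (Finset ℕ)) : Set (↑E → ℝ) :=
  convexHull ℝ (basisVector E '' (↑ℬ : Set (Finset ℕ)))

/-- The indicator function `ℝ^E → ℤ` of the base polytope. -/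
noncomputable def polyInd (E : Finset ℕ) (ℬ : Finset (Finset ℕ)) : (↑E → ℝ) → ℤ :=
  fun x => if x ∈ basePolytope E ℬ then 1 else 0

/-- The indicator function `ℝ^E → ℤ` of the relative interior of the base polytope. -/
noncomputable def relintInd (E : Finset ℕ) (ℬ : Finset (Finset ℕ)) : (↑E → ℝ) → ℤ :=
  fun x => if x ∈ intrinsicInterior ℝ (basePolytope E ℬ) then 1 else 0

/-! ### Cyclic flats and the cyclic chain lattice -/

/-- `F` is a flat of the matroid with bases `ℬ` on `E`. -/
def IsFlat (E : Finset ℕ) (ℬ : Finset (Finset ℕ)) (F : Finset ℕ) : Prop :=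
  F ⊆ E ∧ ∀ e ∈ E, famRank ℬ (insert e F) = famRank ℬ F → e ∈ F

/-- `F` is a cyclic flat: a flat whose restriction has no coloops. -/
def IsCyclicFlat (E : Finset ℕ) (ℬ : Finset (Finset ℕ)) (F : Finset ℕ) : Prop :=
  IsFlat E ℬ F ∧ ∀ e ∈ F, ¬ (∀ S ∈ famRestrict ℬ F, e ∈ S)

/-- The set of cyclic flats. -/
noncomputable def cyclicFlats (E : Finset ℕ) (ℬ : Finset (Finset ℕ)) : Finset (Finset ℕ) :=
  E.powerset.filter (IsCyclicFlat E ℬ)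

/-- A chain of cyclic flats containing the minimum and maximum of the lattice of
cyclic flats; these are the elements (other than the top `1̂`) of the cyclic
chain lattice. -/
def IsCyclicChain (E : Finset ℕ) (ℬ : Finset (Finset ℕ)) (C : Finset (Finset ℕ)) : Prop :=
  ↑C ⊆ (cyclicFlats E ℬ : Set (Finset ℕ)) ∧ IsChain (· ⊆ ·) (↑C : Set (Finset ℕ)) ∧
    (∃ F ∈ C, ∀ G ∈ cyclicFlats E ℬ, F ⊆ G) ∧
    (∃ F ∈ C, ∀ G ∈ cyclicFlats E ℬ, G ⊆ F)

/-- The set of chains of cyclic flats containing the minimum and the maximum. -/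
noncomputable def cyclicChains (E : Finset ℕ) (ℬ : Finset (Finset ℕ)) :
    Finset (Finset (Finset ℕ)) :=
  (cyclicFlats E ℬ).powerset.filter (IsCyclicChain E ℬ)

/-- The rank function `A ↦ min_{Z ∈ C} (rk_M(Z) + |A ∖ Z|)` associated to a chain `C`. -/
noncomputable def chainRank (ℬ : Finset (Finset ℕ)) (C : Finset (Finset ℕ))
    (A : Finset ℕ) : ℕ :=
  if h : C.Nonempty then C.inf' h fun Z => famRank ℬ Z + (A \ Z).card else A.card

/-- The bases of the matroid on `E` with rank function `rk`:
the subsets `B ⊆ E` with `rk B = |B| = rk E`. -/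
noncomputable def basesOfRank (E : Finset ℕ) (rk : Finset ℕ → ℕ) : Finset (Finset ℕ) :=
  E.powerset.filter fun B => rk B = B.card ∧ rk B = rk E

/-- The bases of the Schubert matroid `S_C` associated to a chain `C` of cyclic flats. -/
noncomputable def chainSchubert (E : Finset ℕ) (ℬ : Finset (Finset ℕ))
    (C : Finset (Finset ℕ)) : Finset (Finset ℕ) :=
  basesOfRank E (chainRank ℬ C)

/-- The point reached by `path(S)` after `k` steps. -/
def pathPoint (S : Finset ℕ) (k : ℕ) : ℕ × ℕ :=
  (k - (S ∩ Finset.Icc 1 k).card, (S ∩ Finset.Icc 1 k).card)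


section Aux
variable {α : Type} [LinearOrder α]

lemma forall2_countP (t : α) {u b : List α} (h : List.Forall₂ (· ≤ ·) u b) :
    u.countP (fun x => t ≤ x) ≤ b.countP (fun x => t ≤ x) := by
  induction h with
  | nil => simp
  | @cons a c u' b' hac _ ih =>
    simp only [List.countP_cons]
    have : (if t ≤ a then 1 else 0) ≤ (if t ≤ c then 1 else 0) := by
      split_ifs with h1 h2 <;> try omega
      exact absurd (h1.trans hac) h2
    simp only [decide_eq_true_eq]
    omega

lemma countP_to_forall2 : ∀ {u b : List α}, u.Pairwise (· ≤ ·) → b.Pairwise (· ≤ ·) →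
    u.length = b.length →
    (∀ t, u.countP (fun x => t ≤ x) ≤ b.countP (fun x => t ≤ x)) →
    List.Forall₂ (· ≤ ·) u b := by
  intro u
  induction u with
  | nil =>
    intro b _ _ hlen _
    simp at hlen
    simp [← hlen.symm, List.length_eq_zero_iff.mp hlen.symm]
  | cons a u' ih =>
    intro b hu hb hlen hcnt
    obtain ⟨c, b', rfl⟩ : ∃ c b', b = c :: b' := by
      cases b with
      | nil => simp at hlen
      | cons c b' => exact ⟨c, b', rfl⟩
    obtain ⟨hau', hu'⟩ := List.pairwise_cons.mp hu
    obtain ⟨hcb', hb'⟩ := List.pairwise_cons.mp hb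
    have hlen' : u'.length = b'.length := by simpa using hlen
    have hac : a ≤ c := by
      have h1 := hcnt a
      have h2 : (a :: u').countP (fun x => a ≤ x) = (a :: u').length := by
        rw [List.countP_eq_length]
        intro x hx
        simp only [decide_eq_true_eq]
        rcases List.mem_cons.mp hx with rfl | hx
        · exact le_refl x
        · exact hau' x hx
      have h3 : (c :: b').countP (fun x => a ≤ x) = (c :: b').length := by
        have hle := List.countP_le_length (l := c :: b') (p := fun x => decide (a ≤ x))
        omega
      have := (List.countP_eq_length (p := fun x => decide (a ≤ x))).mp h3 c (by simp)
      simpa using this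
    refine List.Forall₂.cons hac (ih hu' hb' hlen' ?_)
    intro t
    rcases le_or_gt t a with h1 | h1
    · have h2 : t ≤ c := h1.trans hac
      have := hcnt t
      simp only [List.countP_cons, decide_eq_true_eq, if_pos h1, if_pos h2] at this
      omega
    · rcases le_or_gt t c with h2 | h2
      · have h3 : b'.countP (fun x => t ≤ x) = b'.length := by
          rw [List.countP_eq_length]
          intro x hx
          simp only [decide_eq_true_eq]
          exact h2.trans (hcb' x hx)
        have h4 := List.countP_le_length (l := u') (p := fun x => decide (t ≤ x))
        omega
      · have := hcnt t
        simp only [List.countP_cons, decide_eq_true_eq, if_neg (not_le.mpr h1),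
          if_neg (not_le.mpr h2)] at this
        omega

lemma card_filter_eq_countP (t : α) (S : Finset α) :
    (S.filter (fun x => t ≤ x)).card = (S.sort (· ≤ ·)).countP (fun x => t ≤ x) := by
  have h1 : (S.sort (· ≤ ·)).countP (fun x => decide (t ≤ x)) =
      S.toList.countP (fun x => decide (t ≤ x)) :=
    (S.sort_perm_toList (· ≤ ·)).countP_eq _
  have h2 : (S.filter (fun x => t ≤ x)).card = Multiset.countP (fun x => t ≤ x) S.val := by
    rw [Multiset.countP_eq_card_filter]
    rfl
  have h3 : Multiset.countP (fun x => t ≤ x) S.val =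
      S.toList.countP (fun x => decide (t ≤ x)) := by
    rw [← Finset.coe_toList S, Multiset.coe_countP]
  rw [h2, h3, ← h1]

lemma galeLe_iff_count {U B : Finset α} (hcard : U.card = B.card) :
    galeLe U B ↔ ∀ t, (U.filter (fun x => t ≤ x)).card ≤ (B.filter (fun x => t ≤ x)).card := by
  constructor
  · intro h t
    rw [card_filter_eq_countP, card_filter_eq_countP]
    exact forall2_countP t h
  · intro h
    refine countP_to_forall2 (U.pairwise_sort (· ≤ ·)) (B.pairwise_sort (· ≤ ·)) ?_ ?_
    · simp [hcard]
    · intro t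
      have := h t
      rwa [card_filter_eq_countP, card_filter_eq_countP] at this

lemma exists_mem_sdiff_of_count {B₁ B₂ : Finset α} {x t : α}
    (hx₁ : x ∈ B₁) (hx₂ : x ∉ B₂) (htx : t ≤ x)
    (hc : (B₁.filter fun z => t ≤ z).card ≤ (B₂.filter fun z => t ≤ z).card) :
    ∃ z ∈ B₂ \ B₁, t ≤ z := by
  by_contra hcon
  push_neg at hcon
  have hsub : B₂.filter (fun z => t ≤ z) ⊆ (B₁.filter fun z => t ≤ z).erase x := by
    intro z hz
    rw [Finset.mem_filter] at hz
    have hzB₁ : z ∈ B₁ := by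
      by_contra hzb
      exact absurd (hcon z (Finset.mem_sdiff.mpr ⟨hz.1, hzb⟩)) (not_lt.mpr hz.2)
    refine Finset.mem_erase.mpr ⟨?_, Finset.mem_filter.mpr ⟨hzB₁, hz.2⟩⟩
    rintro rfl
    exact hx₂ hz.1
  have h1 : ((B₁.filter fun z => t ≤ z).erase x).card < (B₁.filter fun z => t ≤ z).card :=
    Finset.card_erase_lt_of_mem (Finset.mem_filter.mpr ⟨hx₁, htx⟩)
  have h2 := Finset.card_le_card hsub
  omega
end Aux

/-- Let `E` be a finite linearly ordered set (here, the type `α`),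
`0 ≤ r ≤ |E|`, and let `U` be an `r`-element subset of `E`. Then the family
`𝔅 = {B ⊆ E : |B| = r and U ≤ B in the Gale order}` is the collection of bases of a
matroid on `E`: it is nonempty and satisfies the basis exchange property. -/
theorem statement15 (α : Type) [Fintype α] [LinearOrder α] (r : ℕ)
    (hr : r ≤ Fintype.card α) (U : Finset α) (hU : U.card = r) :
    (Finset.univ.powerset.filter fun B : Finset α => B.card = r ∧ galeLe U B).Nonempty ∧
    ∀ B₁ ∈ Finset.univ.powerset.filter fun B : Finset α => B.card = r ∧ galeLe U B,
      ∀ B₂ ∈ Finset.univ.powerset.filter fun B : Finset α => B.card = r ∧ galeLe U B,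
        ∀ x ∈ B₁ \ B₂,
          ∃ y ∈ B₂ \ B₁,
            insert y (B₁.erase x) ∈
              Finset.univ.powerset.filter fun B : Finset α => B.card = r ∧ galeLe U B := by
  constructor
  · refine ⟨U, ?_⟩
    simp only [Finset.mem_filter, Finset.mem_powerset]
    exact ⟨Finset.subset_univ U, hU, List.forall₂_same.mpr fun x _ => le_refl x⟩
  · intro B₁ hB₁ B₂ hB₂ x hx
    simp only [Finset.mem_filter, Finset.mem_powerset] at hB₁ hB₂
    obtain ⟨-, hB₁c, hB₁g⟩ := hB₁
    obtain ⟨-, hB₂c, hB₂g⟩ := hB₂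
    rw [Finset.mem_sdiff] at hx
    obtain ⟨hx₁, hx₂⟩ := hx
    have h1 := (galeLe_iff_count (by rw [hU, hB₁c])).mp hB₁g
    have h2 := (galeLe_iff_count (by rw [hU, hB₂c])).mp hB₂g
    have hne : (B₂ \ B₁).Nonempty := by
      rw [Finset.sdiff_nonempty]
      intro hsub
      have : B₂ = B₁ := Finset.eq_of_subset_of_card_le hsub (by omega)
      exact hx₂ (this ▸ hx₁)
    set y := (B₂ \ B₁).max' hne with hy
    have hymem := (B₂ \ B₁).max'_mem hne
    rw [Finset.mem_sdiff] at hymem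
    refine ⟨y, Finset.mem_sdiff.mpr hymem, ?_⟩
    simp only [Finset.mem_filter, Finset.mem_powerset]
    have hynotin : y ∉ B₁.erase x := fun h => hymem.2 (Finset.mem_of_mem_erase h)
    have hcard : (insert y (B₁.erase x)).card = r := by
      rw [Finset.card_insert_of_notMem hynotin, Finset.card_erase_of_mem hx₁, hB₁c]
      have : 1 ≤ r := by rw [← hB₁c]; exact Finset.card_pos.mpr ⟨x, hx₁⟩
      omega
    refine ⟨Finset.subset_univ _, hcard, ?_⟩
    rw [galeLe_iff_count (by rw [hU, hcard])]
    intro t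
    have hkey : ((insert y (B₁.erase x)).filter (fun z => t ≤ z)).card +
        (if t ≤ x then 1 else 0) =
        (B₁.filter (fun z => t ≤ z)).card + (if t ≤ y then 1 else 0) := by
      rw [Finset.filter_insert, Finset.filter_erase]
      have hxmem : t ≤ x → x ∈ B₁.filter (fun z => t ≤ z) :=
        fun h => Finset.mem_filter.mpr ⟨hx₁, h⟩
      have hcpos : t ≤ x → 1 ≤ (B₁.filter (fun z => t ≤ z)).card :=
        fun h => Finset.card_pos.mpr ⟨x, hxmem h⟩
      split_ifs with hty htx htx
      · have : y ∉ (B₁.filter (fun z => t ≤ z)).erase x := by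
          intro h
          exact hymem.2 (Finset.mem_of_mem_filter y (Finset.mem_of_mem_erase h))
        rw [Finset.card_insert_of_notMem this, Finset.card_erase_of_mem (hxmem htx)]
        have := hcpos htx
        omega
      · have hxnot : x ∉ B₁.filter (fun z => t ≤ z) := by
          intro h; exact htx (Finset.mem_filter.mp h).2
        rw [Finset.erase_eq_of_notMem hxnot]
        have : y ∉ B₁.filter (fun z => t ≤ z) := fun h => hymem.2 (Finset.mem_of_mem_filter y h)
        rw [Finset.card_insert_of_notMem this]
      · rw [Finset.card_erase_of_mem (hxmem htx)]
        have := hcpos htx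
        omega
      · have hxnot : x ∉ B₁.filter (fun z => t ≤ z) := by
          intro h; exact htx (Finset.mem_filter.mp h).2
        rw [Finset.erase_eq_of_notMem hxnot]
    rcases le_or_gt t y with hty | hty
    · rw [if_pos hty] at hkey
      have := h1 t
      split_ifs at hkey <;> omega
    · rw [if_neg (not_le.mpr hty)] at hkey
      rcases le_or_gt t x with htx | htx
      · rw [if_pos htx] at hkey
        by_contra hcon
        push_neg at hcon
        have heq : (B₁.filter fun z => t ≤ z).card ≤ (B₂.filter fun z => t ≤ z).card := by
          have := h1 t
          have := h2 t
          omega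
        obtain ⟨z, hz, htz⟩ := exists_mem_sdiff_of_count hx₁ hx₂ htx heq
        have : z ≤ y := Finset.le_max' _ z hz
        exact absurd (htz.trans this) (not_le.mpr hty)
      · rw [if_neg (not_le.mpr htx)] at hkey
        have := h1 t
        omega
end GPoly
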